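/- Let U ⊆ ℝ³ be a nonempty open semi-algebraic set and let e be a ternary cartesian-product-free relational algebra expression over a ternary set variable S (built using only S, ternary constant semi-algebraic sets, union, intersection, and difference; no products or projections). Then there exists a nonempty open set V ⊆ U and a semi-algebraic set Γ ⊆ ℝ³ such that for all S ⊆ V, the value e(S) equals one of: Γ, S, S ∪ Γ, or Γ − S; and in the last case V may be chosen inside the interior of Γ. -/

import Mathlib

open Set

def IsSemialgebraic {n : ℕ} (A : Set (Fin n → ℝ)) : Prop :=
  ∃ (N : ℕ) (E I : Fin N → Finset (MvPolynomial (Fin n) ℝ)),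
    A = ⋃ m, {x | (∀ p ∈ E m, MvPolynomial.eval x p = 0) ∧
                  (∀ p ∈ I m, 0 < MvPolynomial.eval x p)}

/-- Cartesian-product-free (and projection-free) relational algebra
expressions over a ternary set variable, with semi-algebraic constants. -/
inductive BExpr : Type 1 where
  | var : BExpr
  | const : (C : Set (Fin 3 → ℝ)) → IsSemialgebraic C → BExpr
  | union : BExpr → BExpr → BExpr
  | inter : BExpr → BExpr → BExpr
  | diff : BExpr → BExpr → BExpr

def BExpr.eval : BExpr → Set (Fin 3 → ℝ) → Set (Fin 3 → ℝ)
  | .var, S => S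
  | .const C _, _ => C
  | .union e₁ e₂, S => e₁.eval S ∪ e₂.eval S
  | .inter e₁ e₂, S => e₁.eval S ∩ e₂.eval S
  | .diff e₁ e₂, S => e₁.eval S \ e₂.eval S

open MvPolynomial


lemma analytic_eval {n : ℕ} (p : MvPolynomial (Fin n) ℝ) :
    AnalyticOnNhd ℝ (fun x : Fin n → ℝ => MvPolynomial.eval x p) Set.univ := by
  induction p using MvPolynomial.induction_on with
  | C a => simpa using analyticOnNhd_const
  | add p q hp hq => simp only [map_add]; exact fun x hx => (hp x hx).add (hq x hx)
  | mul_X p i hp =>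
      have h2 : AnalyticOnNhd ℝ (fun x : Fin n → ℝ => x i) Set.univ := fun x _ =>
        (ContinuousLinearMap.proj (R := ℝ) (φ := fun _ : Fin n => ℝ) i).analyticAt x
      simpa using hp.mul h2

lemma dense_ne_zero {n : ℕ} {p : MvPolynomial (Fin n) ℝ} (hp : p ≠ 0) :
    Dense {x : Fin n → ℝ | MvPolynomial.eval x p ≠ 0} := by
  by_contra h
  rw [dense_iff_closure_eq] at h
  have : ∃ x, x ∉ closure {x : Fin n → ℝ | MvPolynomial.eval x p ≠ 0} := by
    by_contra h2
    push_neg at h2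
    exact h (eq_univ_of_forall h2)
  obtain ⟨x, hx⟩ := this
  have hev : (fun y : Fin n → ℝ => MvPolynomial.eval y p) =ᶠ[nhds x] 0 := by
    have : {x : Fin n → ℝ | MvPolynomial.eval x p ≠ 0}ᶜ ∈ nhds x := by
      rw [mem_nhds_iff]
      exact ⟨(closure {x : Fin n → ℝ | MvPolynomial.eval x p ≠ 0})ᶜ,
        compl_subset_compl.2 subset_closure, isClosed_closure.isOpen_compl, hx⟩
    filter_upwards [this] with y hy
    simpa using not_not.mp hy
  have := (analytic_eval p).eqOn_zero_of_preconnected_of_eventuallyEq_zero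
    isPreconnected_univ (mem_univ x) hev
  apply hp
  apply MvPolynomial.funext
  intro y
  simpa using this (mem_univ y)



def Basic {n : ℕ} (b : Finset (MvPolynomial (Fin n) ℝ) × Finset (MvPolynomial (Fin n) ℝ)) :
    Set (Fin n → ℝ) :=
  {x | (∀ p ∈ b.1, MvPolynomial.eval x p = 0) ∧ (∀ p ∈ b.2, 0 < MvPolynomial.eval x p)}

def LSet {n : ℕ} (L : List (Finset (MvPolynomial (Fin n) ℝ) × Finset (MvPolynomial (Fin n) ℝ))) :
    Set (Fin n → ℝ) := ⋃ b ∈ L, Basic b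

lemma isSemialgebraic_iff_list {n : ℕ} (A : Set (Fin n → ℝ)) :
    IsSemialgebraic A ↔ ∃ L, A = LSet (n := n) L := by
  constructor
  · rintro ⟨N, E, I, rfl⟩
    refine ⟨(List.finRange N).map (fun m => (E m, I m)), ?_⟩
    ext x
    simp [LSet, Basic, List.mem_map, List.mem_finRange]
  · rintro ⟨L, rfl⟩
    refine ⟨L.length, fun m => (L.get m).1, fun m => (L.get m).2, ?_⟩
    ext x
    simp only [LSet, Basic, mem_iUnion, mem_setOf_eq, exists_prop]
    constructor
    · rintro ⟨b, hb, h⟩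
      obtain ⟨m, rfl⟩ := List.mem_iff_get.1 hb
      exact ⟨m, h⟩
    · rintro ⟨m, h⟩
      exact ⟨L.get m, List.mem_iff_get.2 ⟨m, rfl⟩, h⟩

lemma LSet_append {n : ℕ} (L1 L2 : List _) :
    LSet (n := n) (L1 ++ L2) = LSet L1 ∪ LSet L2 := by
  ext x
  simp only [LSet, mem_iUnion, exists_prop, mem_union, List.mem_append, or_and_right, exists_or]

lemma sa_empty {n : ℕ} : IsSemialgebraic (∅ : Set (Fin n → ℝ)) :=
  (isSemialgebraic_iff_list _).2 ⟨[], by simp [LSet]⟩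

lemma sa_union {n : ℕ} {A B : Set (Fin n → ℝ)} (hA : IsSemialgebraic A)
    (hB : IsSemialgebraic B) : IsSemialgebraic (A ∪ B) := by
  rw [isSemialgebraic_iff_list] at *
  obtain ⟨L1, rfl⟩ := hA; obtain ⟨L2, rfl⟩ := hB
  exact ⟨L1 ++ L2, (LSet_append L1 L2).symm⟩

lemma Basic_inter {n : ℕ} (b c : Finset (MvPolynomial (Fin n) ℝ) × Finset (MvPolynomial (Fin n) ℝ)) :
    Basic b ∩ Basic c = Basic (b.1 ∪ c.1, b.2 ∪ c.2) := by
  ext x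
  simp only [Basic, mem_inter_iff, mem_setOf_eq, Finset.mem_union]
  constructor
  · rintro ⟨⟨h1, h2⟩, ⟨h3, h4⟩⟩
    exact ⟨fun p hp => hp.elim (h1 p) (h3 p), fun p hp => hp.elim (h2 p) (h4 p)⟩
  · rintro ⟨h1, h2⟩
    exact ⟨⟨fun p hp => h1 p (Or.inl hp), fun p hp => h2 p (Or.inl hp)⟩,
      ⟨fun p hp => h1 p (Or.inr hp), fun p hp => h2 p (Or.inr hp)⟩⟩

lemma sa_inter {n : ℕ} {A B : Set (Fin n → ℝ)} (hA : IsSemialgebraic A)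
    (hB : IsSemialgebraic B) : IsSemialgebraic (A ∩ B) := by
  rw [isSemialgebraic_iff_list] at *
  obtain ⟨L1, rfl⟩ := hA; obtain ⟨L2, rfl⟩ := hB
  refine ⟨L1.flatMap (fun b => L2.map (fun c => (b.1 ∪ c.1, b.2 ∪ c.2))), ?_⟩
  ext x
  simp only [LSet, mem_inter_iff, mem_iUnion, exists_prop, List.mem_flatMap, List.mem_map]
  constructor
  · rintro ⟨⟨b, hb, hxb⟩, ⟨c, hc, hxc⟩⟩
    refine ⟨_, ⟨b, hb, c, hc, rfl⟩, ?_⟩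
    rw [← Basic_inter]; exact ⟨hxb, hxc⟩
  · rintro ⟨d, ⟨b, hb, c, hc, rfl⟩, hx⟩
    rw [← Basic_inter] at hx
    exact ⟨⟨b, hb, hx.1⟩, ⟨c, hc, hx.2⟩⟩

lemma Basic_compl {n : ℕ} (b : Finset (MvPolynomial (Fin n) ℝ) × Finset (MvPolynomial (Fin n) ℝ)) :
    (Basic b)ᶜ = LSet (b.1.toList.flatMap (fun p => [(∅, {p}), (∅, {-p})]) ++
      b.2.toList.flatMap (fun q => [({q}, ∅), (∅, {-q})])) := by
  ext x
  simp only [LSet, mem_compl_iff, mem_iUnion, exists_prop, List.mem_append, List.mem_flatMap,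
    Finset.mem_toList]
  constructor
  · intro h
    have h' : (∃ p ∈ b.1, MvPolynomial.eval x p ≠ 0) ∨
        (∃ q ∈ b.2, ¬ 0 < MvPolynomial.eval x q) := by
      by_contra hcon
      push_neg at hcon
      exact h ⟨fun p hp => hcon.1 p hp, fun q hq => hcon.2 q hq⟩
    rcases h' with ⟨p, hp, hne⟩ | ⟨q, hq, hle⟩
    · rcases lt_or_gt_of_ne hne with hlt | hgt
      · refine ⟨(∅, {-p}), Or.inl ⟨p, hp, by simp⟩, ?_⟩
        simp only [Basic, mem_setOf_eq, Finset.notMem_empty, Finset.mem_singleton]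
        exact ⟨fun _ h => absurd h (by simp), fun q hq => by rw [hq]; simp; linarith⟩
      · refine ⟨(∅, {p}), Or.inl ⟨p, hp, by simp⟩, ?_⟩
        simp only [Basic, mem_setOf_eq, Finset.notMem_empty, Finset.mem_singleton]
        exact ⟨fun _ h => absurd h (by simp), fun q hq => by rw [hq]; linarith⟩
    · rcases eq_or_lt_of_le (not_lt.mp hle) with heq | hlt
      · refine ⟨({q}, ∅), Or.inr ⟨q, hq, by simp⟩, ?_⟩
        simp only [Basic, mem_setOf_eq, Finset.mem_singleton]
        exact ⟨fun p hp => by rw [hp, ← heq], fun _ h => absurd h (by simp)⟩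
      · refine ⟨(∅, {-q}), Or.inr ⟨q, hq, by simp⟩, ?_⟩
        simp only [Basic, mem_setOf_eq, Finset.mem_singleton]
        exact ⟨fun _ h => absurd h (by simp), fun p hp => by rw [hp]; simp; linarith⟩
  · rintro ⟨c, hc, hx⟩ hb
    simp only [List.mem_cons, List.mem_singleton, List.not_mem_nil, or_false] at hc
    rcases hc with ⟨p, hp, rfl | rfl⟩ | ⟨q, hq, rfl | rfl⟩
    · have h1 := hx.2 p (Finset.mem_singleton_self p)
      have h2 := hb.1 p hp
      linarith
    · have h1 := hx.2 (-p) (Finset.mem_singleton_self _)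
      have h2 := hb.1 p hp
      simp only [map_neg] at h1
      linarith
    · have h1 := hx.1 q (Finset.mem_singleton_self q)
      have h2 := hb.2 q hq
      linarith
    · have h1 := hx.2 (-q) (Finset.mem_singleton_self _)
      have h2 := hb.2 q hq
      simp only [map_neg] at h1
      linarith

lemma sa_compl {n : ℕ} {A : Set (Fin n → ℝ)} (hA : IsSemialgebraic A) :
    IsSemialgebraic Aᶜ := by
  rw [isSemialgebraic_iff_list] at hA
  obtain ⟨L, rfl⟩ := hA
  induction L with
  | nil =>
      have : (LSet (n := n) [])ᶜ = LSet [(∅, ∅)] := by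
        ext x; simp [LSet, Basic]
      rw [this]; exact (isSemialgebraic_iff_list _).2 ⟨_, rfl⟩
  | cons b t ih =>
      have : (LSet (n := n) (b :: t))ᶜ = (Basic b)ᶜ ∩ (LSet t)ᶜ := by
        ext x
        simp only [LSet, List.mem_cons, mem_compl_iff, mem_iUnion, exists_prop, mem_inter_iff]
        push_neg
        constructor
        · intro h
          exact ⟨h b (Or.inl rfl), fun c hc => h c (Or.inr hc)⟩
        · rintro ⟨h1, h2⟩ c (rfl | hc)
          · exact h1
          · exact h2 c hc
      rw [this, Basic_compl]
      exact sa_inter ((isSemialgebraic_iff_list _).2 ⟨_, rfl⟩) ih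

lemma sa_diff {n : ℕ} {A B : Set (Fin n → ℝ)} (hA : IsSemialgebraic A)
    (hB : IsSemialgebraic B) : IsSemialgebraic (A \ B) :=
  sa_inter hA (sa_compl hB)


section
variable {X : Type*} [TopologicalSpace X]

def GoodSet (A : Set X) : Prop := Dense (interior A ∪ (closure A)ᶜ)

lemma good_open {A : Set X} (h : IsOpen A) : GoodSet A := by
  intro x
  rw [mem_closure_iff]
  intro W hW hxW
  by_cases hWA : (W ∩ A).Nonempty
  · obtain ⟨y, hy⟩ := hWA
    exact ⟨y, hy.1, Or.inl (h.subset_interior_iff.mpr subset_rfl hy.2)⟩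
  · refine ⟨x, hxW, Or.inr ?_⟩
    rw [not_nonempty_iff_eq_empty] at hWA
    intro hx
    obtain ⟨y, hyW, hyA⟩ := mem_closure_iff.1 hx W hW hxW
    have : y ∈ W ∩ A := ⟨hyW, hyA⟩
    rw [hWA] at this
    exact this

lemma good_sub {A Z : Set X} (hAZ : A ⊆ Z) (hZ : IsClosed Z) (hd : Dense Zᶜ) : GoodSet A :=
  hd.mono (fun x hx => Or.inr (fun hc => (Set.mem_compl_iff _ _).mp hx ((closure_minimal hAZ hZ) hc)))

lemma good_union {A B : Set X} (hA : GoodSet A) (hB : GoodSet B) : GoodSet (A ∪ B) := by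
  have hopen : ∀ C : Set X, IsOpen (interior C ∪ (closure C)ᶜ) := fun C =>
    isOpen_interior.union isClosed_closure.isOpen_compl
  have := (hA.inter_of_isOpen_left hB (hopen A))
  refine this.mono ?_
  rintro x ⟨hx1, hx2⟩
  rcases hx1 with h | h
  · exact Or.inl (interior_mono subset_union_left h)
  · rcases hx2 with h2 | h2
    · exact Or.inl (interior_mono subset_union_right h2)
    · exact Or.inr (by rw [closure_union]; simp only [mem_compl_iff, mem_union]; tauto)

end

lemma basic_open_of_triv {n : ℕ} {b : Finset (MvPolynomial (Fin n) ℝ) × Finset (MvPolynomial (Fin n) ℝ)}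
    (h : ∀ p ∈ b.1, p = 0) :
    IsOpen {x : Fin n → ℝ | (∀ p ∈ b.1, MvPolynomial.eval x p = 0) ∧
      (∀ p ∈ b.2, 0 < MvPolynomial.eval x p)} := by
  have : {x : Fin n → ℝ | (∀ p ∈ b.1, MvPolynomial.eval x p = 0) ∧
      (∀ p ∈ b.2, 0 < MvPolynomial.eval x p)} = ⋂ q ∈ b.2, {x | 0 < MvPolynomial.eval x q} := by
    ext x
    simp only [mem_setOf_eq, mem_iInter]
    constructor
    · exact fun hx q hq => hx.2 q hq
    · intro hx
      exact ⟨fun p hp => by rw [h p hp]; simp, hx⟩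
  rw [this]
  exact isOpen_biInter_finset fun q _ =>
    isOpen_lt continuous_const (MvPolynomial.continuous_eval q)


lemma good_basic {n : ℕ} (b : Finset (MvPolynomial (Fin n) ℝ) × Finset (MvPolynomial (Fin n) ℝ)) :
    GoodSet (Basic b) := by
  by_cases hE : ∀ p ∈ b.1, p = 0
  · exact good_open (basic_open_of_triv hE)
  · push_neg at hE
    obtain ⟨p, hp, hne⟩ := hE
    refine good_sub (Z := {x | MvPolynomial.eval x p = 0}) (fun x hx => hx.1 p hp)
      (isClosed_eq (MvPolynomial.continuous_eval p) continuous_const) ?_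
    have : {x : Fin n → ℝ | MvPolynomial.eval x p = 0}ᶜ =
        {x : Fin n → ℝ | MvPolynomial.eval x p ≠ 0} := by
      ext x; simp
    rw [this]
    exact dense_ne_zero hne

lemma LSet_cons {n : ℕ} (b) (t : List _) :
    LSet (n := n) (b :: t) = Basic b ∪ LSet t := by
  ext x
  simp only [LSet, mem_iUnion, exists_prop, mem_union, List.mem_cons, or_and_right, exists_or,
    exists_eq_left]

lemma good_LSet {n : ℕ} (L : List (Finset (MvPolynomial (Fin n) ℝ) × Finset (MvPolynomial (Fin n) ℝ))) :
    GoodSet (LSet L) := by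
  induction L with
  | nil =>
      have : LSet (n := n) [] = ∅ := by simp [LSet]
      rw [this]; exact good_open isOpen_empty
  | cons b t ih =>
      rw [LSet_cons]
      exact good_union (good_basic b) ih

lemma shrink {n : ℕ} {Γ V : Set (Fin n → ℝ)} (hΓ : IsSemialgebraic Γ) (hV : IsOpen V)
    (hne : V.Nonempty) :
    ∃ V', V'.Nonempty ∧ IsOpen V' ∧ V' ⊆ V ∧ (V' ⊆ interior Γ ∨ V' ∩ closure Γ = ∅) := by
  obtain ⟨L, rfl⟩ := (isSemialgebraic_iff_list Γ).1 hΓ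
  obtain ⟨x, hx1, hx2⟩ := (good_LSet L).exists_mem_open hV hne
  rcases hx1 with h | h
  · refine ⟨V ∩ interior (LSet L), ⟨x, hx2, h⟩, hV.inter isOpen_interior, inter_subset_left,
      Or.inl inter_subset_right⟩
  · refine ⟨V \ closure (LSet L), ⟨x, hx2, h⟩, hV.sdiff isClosed_closure, diff_subset,
      Or.inr ?_⟩
    ext y
    simp only [mem_inter_iff, mem_diff, mem_empty_iff_false, iff_false, not_and]
    tauto

lemma main_ind (e : BExpr) : ∀ V : Set (Fin 3 → ℝ), IsOpen V → V.Nonempty →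
    ∃ V' Γ, V'.Nonempty ∧ IsOpen V' ∧ V' ⊆ V ∧ IsSemialgebraic Γ ∧
      ((∀ S, S ⊆ V' → e.eval S = (Γ \ S) ∪ S) ∨ (∀ S, S ⊆ V' → e.eval S = Γ \ S)) := by
  induction e with
  | var =>
      intro V hV hne
      refine ⟨V, ∅, hne, hV, subset_rfl, sa_empty, Or.inl fun S _ => ?_⟩
      simp [BExpr.eval]
  | const C hC =>
      intro V hV hne
      obtain ⟨V', hne', hop', hsub', hflag⟩ := shrink hC hV hne
      rcases hflag with h | h
      · refine ⟨V', C, hne', hop', hsub', hC, Or.inl fun S hS => ?_⟩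
        have hSC : S ⊆ C := hS.trans (h.trans interior_subset)
        simp only [BExpr.eval]
        rw [diff_union_of_subset hSC]
      · refine ⟨V', C, hne', hop', hsub', hC, Or.inr fun S hS => ?_⟩
        have hSC : S ∩ C = ∅ := by
          apply eq_empty_of_subset_empty
          rw [← h]
          exact fun x hx => ⟨hS hx.1, subset_closure hx.2⟩
        simp only [BExpr.eval]
        ext x
        simp only [mem_diff]
        constructor
        · intro hx
          refine ⟨hx, fun hxS => ?_⟩
          have : x ∈ S ∩ C := ⟨hxS, hx⟩
          rw [hSC] at this; exact this
        · exact fun hx => hx.1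
  | union e1 e2 ih1 ih2 =>
      intro V hV hne
      obtain ⟨V1, A, hne1, hop1, hsub1, hsaA, hvalA⟩ := ih1 V hV hne
      obtain ⟨V2, B, hne2, hop2, hsub2, hsaB, hvalB⟩ := ih2 V1 hop1 hne1
      refine ⟨V2, A ∪ B, hne2, hop2, hsub2.trans hsub1, sa_union hsaA hsaB, ?_⟩
      have hA : ∀ S, S ⊆ V2 → (e1.eval S = (A \ S) ∪ S ∨ e1.eval S = A \ S) := by
        intro S hS
        rcases hvalA with h | h
        · exact Or.inl (h S (hS.trans hsub2))
        · exact Or.inr (h S (hS.trans hsub2))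
      rcases hvalA with hA1 | hA1 <;> rcases hvalB with hB1 | hB1
      · refine Or.inl fun S hS => ?_
        simp only [BExpr.eval, hA1 S (hS.trans hsub2), hB1 S hS]
        ext x; simp only [mem_union, mem_diff]; tauto
      · refine Or.inl fun S hS => ?_
        simp only [BExpr.eval, hA1 S (hS.trans hsub2), hB1 S hS]
        ext x; simp only [mem_union, mem_diff]; tauto
      · refine Or.inl fun S hS => ?_
        simp only [BExpr.eval, hA1 S (hS.trans hsub2), hB1 S hS]
        ext x; simp only [mem_union, mem_diff]; tauto
      · refine Or.inr fun S hS => ?_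
        simp only [BExpr.eval, hA1 S (hS.trans hsub2), hB1 S hS]
        ext x; simp only [mem_union, mem_diff]; tauto
  | inter e1 e2 ih1 ih2 =>
      intro V hV hne
      obtain ⟨V1, A, hne1, hop1, hsub1, hsaA, hvalA⟩ := ih1 V hV hne
      obtain ⟨V2, B, hne2, hop2, hsub2, hsaB, hvalB⟩ := ih2 V1 hop1 hne1
      refine ⟨V2, A ∩ B, hne2, hop2, hsub2.trans hsub1, sa_inter hsaA hsaB, ?_⟩
      rcases hvalA with hA1 | hA1 <;> rcases hvalB with hB1 | hB1
      · refine Or.inl fun S hS => ?_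
        simp only [BExpr.eval, hA1 S (hS.trans hsub2), hB1 S hS]
        ext x; simp only [mem_inter_iff, mem_union, mem_diff]; tauto
      · refine Or.inr fun S hS => ?_
        simp only [BExpr.eval, hA1 S (hS.trans hsub2), hB1 S hS]
        ext x; simp only [mem_inter_iff, mem_union, mem_diff]; tauto
      · refine Or.inr fun S hS => ?_
        simp only [BExpr.eval, hA1 S (hS.trans hsub2), hB1 S hS]
        ext x; simp only [mem_inter_iff, mem_union, mem_diff]; tauto
      · refine Or.inr fun S hS => ?_
        simp only [BExpr.eval, hA1 S (hS.trans hsub2), hB1 S hS]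
        ext x; simp only [mem_inter_iff, mem_union, mem_diff]; tauto
  | diff e1 e2 ih1 ih2 =>
      intro V hV hne
      obtain ⟨V1, A, hne1, hop1, hsub1, hsaA, hvalA⟩ := ih1 V hV hne
      obtain ⟨V2, B, hne2, hop2, hsub2, hsaB, hvalB⟩ := ih2 V1 hop1 hne1
      refine ⟨V2, A \ B, hne2, hop2, hsub2.trans hsub1, sa_diff hsaA hsaB, ?_⟩
      rcases hvalA with hA1 | hA1 <;> rcases hvalB with hB1 | hB1
      · refine Or.inr fun S hS => ?_
        simp only [BExpr.eval, hA1 S (hS.trans hsub2), hB1 S hS]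
        ext x; simp only [mem_diff, mem_union]; tauto
      · refine Or.inl fun S hS => ?_
        simp only [BExpr.eval, hA1 S (hS.trans hsub2), hB1 S hS]
        ext x; simp only [mem_diff, mem_union]; tauto
      · refine Or.inr fun S hS => ?_
        simp only [BExpr.eval, hA1 S (hS.trans hsub2), hB1 S hS]
        ext x; simp only [mem_diff, mem_union]; tauto
      · refine Or.inr fun S hS => ?_
        simp only [BExpr.eval, hA1 S (hS.trans hsub2), hB1 S hS]
        ext x; simp only [mem_diff, mem_union]; tauto

theorem stmt11 (U : Set (Fin 3 → ℝ)) (hUne : U.Nonempty) (hUop : IsOpen U)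
    (hUsa : IsSemialgebraic U) (e : BExpr) :
    ∃ (V : Set (Fin 3 → ℝ)) (Γ : Set (Fin 3 → ℝ)),
      V.Nonempty ∧ IsOpen V ∧ V ⊆ U ∧ IsSemialgebraic Γ ∧
      ((∀ S : Set (Fin 3 → ℝ), S ⊆ V → e.eval S = Γ) ∨
       (∀ S : Set (Fin 3 → ℝ), S ⊆ V → e.eval S = S) ∨
       (∀ S : Set (Fin 3 → ℝ), S ⊆ V → e.eval S = S ∪ Γ) ∨
       (V ⊆ interior Γ ∧ ∀ S : Set (Fin 3 → ℝ), S ⊆ V → e.eval S = Γ \ S)) := by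
  obtain ⟨V', Γ, hne', hop', hsub', hsa, hval⟩ := main_ind e U hUop hUne
  obtain ⟨V'', hne'', hop'', hsub'', hflag⟩ := shrink hsa hop' hne'
  refine ⟨V'', Γ, hne'', hop'', hsub''.trans hsub', hsa, ?_⟩
  rcases hval with hval | hval
  · refine Or.inr (Or.inr (Or.inl fun S hS => ?_))
    rw [hval S (hS.trans hsub''), union_comm, union_diff_self]
  · rcases hflag with h | h
    · exact Or.inr (Or.inr (Or.inr ⟨h, fun S hS => hval S (hS.trans hsub'')⟩))
    · refine Or.inl fun S hS => ?_
      rw [hval S (hS.trans hsub'')]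
      have hSΓ : S ∩ Γ = ∅ := by
        apply eq_empty_of_subset_empty
        rw [← h]
        exact fun x hx => ⟨hS hx.1, subset_closure hx.2⟩
      ext x
      simp only [mem_diff]
      constructor
      · exact fun hx => hx.1
      · intro hx
        refine ⟨hx, fun hxS => ?_⟩
        have : x ∈ S ∩ Γ := ⟨hxS, hx⟩
        rw [hSΓ] at this
        exact this
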